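/- Let V ⊆ ℓ² be a pseudo-convex domain with plurisubharmonic exhaustion function η ∈ C^∞_F(V), and let f be a complex-valued function on V which is locally bounded in the sense that sup_E |f| < ∞ for every E ⊂∘ V. Then there exists g ∈ C^∞_F(V) such that |f(z)| ≤ g(z) for all z ∈ V. -/

import Mathlib

open MeasureTheory Filter Metric Set
open scoped ENNReal NNReal Topology ComplexOrder

noncomputable section


noncomputable section

abbrev H : Type := lp (fun _ : ℕ => ℂ) 2

/-- The direction vector: `(true, j) ↦ e_j` (the `x_j` direction) and
`(false, j) ↦ √-1 • e_j` (the `y_j` direction). -/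
noncomputable def dir : Bool × ℕ → H :=
  fun d => if d.1 then lp.single 2 d.2 (1 : ℂ) else lp.single 2 d.2 Complex.I

/-- The partial derivative of `f` at `z` in the direction `v` (junk value if it does not exist):
`lim_{ℝ ∋ τ → 0} (f (z + τ • v) - f z)/τ`. -/
noncomputable def pder (v : H) (f : H → ℂ) (z : H) : ℂ :=
  deriv (fun τ : ℝ => f (z + τ • v)) 0

/-- Existence of the partial derivative of `f` at `z` in the direction `v`. -/
def HasPD (v : H) (f : H → ℂ) (z : H) : Prop :=
  DifferentiableAt ℝ (fun τ : ℝ => f (z + τ • v)) 0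

/-- `coordD (true, j) = D_{x_j}`, `coordD (false, j) = D_{y_j}`. -/
noncomputable def coordD (d : Bool × ℕ) (f : H → ℂ) : H → ℂ := pder (dir d) f

/-- Iterated coordinatewise partial derivatives. -/
noncomputable def iterD : List (Bool × ℕ) → (H → ℂ) → H → ℂ
  | [], f => f
  | d :: L, f => coordD d (iterD L f)

/-- `f ∈ C^k(V)` : all partial derivatives of order `< k` exist on `V`, and all iterated
partial derivatives of order `≤ k` are continuous on `V`. -/
def MemCk (V : Set H) (k : ℕ) (f : H → ℂ) : Prop :=
  (∀ L : List (Bool × ℕ), L.length ≤ k → ContinuousOn (iterD L f) V) ∧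
  (∀ L : List (Bool × ℕ), L.length < k → ∀ d : Bool × ℕ, ∀ z ∈ V, HasPD (dir d) (iterD L f) z)

/-- `f ∈ C^∞(V)`. -/
def MemCinf (V : Set H) (f : H → ℂ) : Prop := ∀ k : ℕ, MemCk V k f

/-- `f ∈ C^k_b(V)` : moreover `f` and its partial derivatives up to order `k` are bounded. -/
def MemCkb (V : Set H) (k : ℕ) (f : H → ℂ) : Prop :=
  MemCk V k f ∧ ∀ L : List (Bool × ℕ), L.length ≤ k → ∃ M : ℝ, ∀ z ∈ V, ‖iterD L f z‖ ≤ M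

/-- `S ⊂∘ V` : `S` is uniformly included in `V`. -/
def UnifIncl (S V : Set H) : Prop :=
  ∃ r R : ℝ, 0 < r ∧ 0 < R ∧ (∀ z ∈ S, Metric.ball z r ⊆ V) ∧ S ⊆ Metric.ball 0 R

/-- The support of `f` relative to `V` (the closure, in the subspace topology of `V`,
of `{z ∈ V | f z ≠ 0}`). -/
def suppIn (V : Set H) (f : H → ℂ) : Set H := V ∩ closure {z | z ∈ V ∧ f z ≠ 0}

/-- `f ∈ C^k_0(V)`. -/
def MemCkZero (V : Set H) (k : ℕ) (f : H → ℂ) : Prop :=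
  MemCkb V k f ∧ UnifIncl (suppIn V f) V

/-- `f ∈ C^∞_0(V)`. -/
def MemCinfZero (V : Set H) (f : H → ℂ) : Prop := ∀ k : ℕ, MemCkZero V k f

/-- `∂_j f`. -/
noncomputable def pd (j : ℕ) (f : H → ℂ) (z : H) : ℂ :=
  (coordD (true, j) f z - Complex.I * coordD (false, j) f z) / 2

/-- `∂̄_j f`. -/
noncomputable def dbar (j : ℕ) (f : H → ℂ) (z : H) : ℂ :=
  (coordD (true, j) f z + Complex.I * coordD (false, j) f z) / 2

/-- `δ_j f = ∂_j f - (z̄_j/(2 a_j²)) f`. -/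
noncomputable def deltaOp (a : ℕ → ℝ) (j : ℕ) (f : H → ℂ) (z : H) : ℂ :=
  pd j f z - (starRingEnd ℂ) (z j) / (2 * (a j : ℂ) ^ 2) * f z

/-- The boundedness condition defining `C¹_F(V)`:
`sup_E (|f| + ∑_i (|D_{x_i} f|² + |D_{y_i} f|²)) < ∞` for every `E ⊂∘ V`. -/
def FBound (V : Set H) (f : H → ℂ) : Prop :=
  ∀ E : Set H, UnifIncl E V → ∃ M : ℝ, ∀ z ∈ E,
    ENNReal.ofReal ‖f z‖ +
      ∑' j : ℕ, (ENNReal.ofReal (‖coordD (true, j) f z‖ ^ 2) +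
        ENNReal.ofReal (‖coordD (false, j) f z‖ ^ 2)) ≤ ENNReal.ofReal M

/-- `f ∈ C¹_F(V)`. -/
def MemC1F (V : Set H) (f : H → ℂ) : Prop := MemCk V 1 f ∧ FBound V f

/-- `f ∈ C^∞_{0,F}(V) = C^∞_0(V) ∩ C¹_F(V)`. -/
def MemC0F (V : Set H) (f : H → ℂ) : Prop := MemCinfZero V f ∧ MemC1F V f

/-- Iterated Wirtinger derivatives: `(true, j) ↦ ∂_j`, `(false, j) ↦ ∂̄_j`. -/
noncomputable def wIter : List (Bool × ℕ) → (H → ℂ) → H → ℂ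
  | [], f => f
  | (b, j) :: L, f => if b then pd j (wIter L f) else dbar j (wIter L f)

/-- `f ∈ C^∞_{0,F^∞}(V)` : `f ∈ C^∞_0(V)` and `∂_α ∂̄_β f ∈ C¹_F(V)` for all
finitely supported multi-indices `α`, `β`. -/
def MemC0Finf (V : Set H) (f : H → ℂ) : Prop :=
  MemCinfZero V f ∧
  ∀ Lα Lβ : List ℕ,
    MemC1F V (wIter (Lα.map (fun i => (true, i)) ++ Lβ.map (fun j => (false, j))) f)

/-- A real-valued function regarded as a complex-valued one. -/
def cplx (φ : H → ℝ) : H → ℂ := fun z => (φ z : ℂ)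

/-- The Levi form `∑_{1 ≤ i,j ≤ n} (∂_i ∂̄_j η)(z) ζ_i conj(ζ_j)`. -/
noncomputable def herm (η : H → ℂ) (n : ℕ) (z : H) (ζ : ℕ → ℂ) : ℂ :=
  ∑ i ∈ Finset.range n, ∑ j ∈ Finset.range n,
    pd i (dbar j η) z * ζ i * (starRingEnd ℂ) (ζ j)

/-- Plurisubharmonicity inequality (the order on `ℂ` is the `ComplexOrder`). -/
def PSH (V : Set H) (η : H → ℂ) : Prop :=
  ∀ n : ℕ, ∀ z ∈ V, ∀ ζ : ℕ → ℂ, 0 ≤ herm η n z ζ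

/-- `α` is an exhaustion function of `V`. -/
def Exhausts (V : Set H) (α : H → ℝ) : Prop :=
  ∀ τ : ℝ, UnifIncl {z | z ∈ V ∧ α z ≤ τ} V

/-- `η` is a plurisubharmonic exhaustion function of `V` of class `C^∞_F(V)`. -/
def IsPSHExhaustion (V : Set H) (η : H → ℝ) : Prop :=
  MemCinf V (cplx η) ∧ FBound V (cplx η) ∧ Exhausts V η ∧ PSH V (cplx η)

/-- `V` is a pseudo-convex domain in `ℓ²`. -/
def Pseudoconvex (V : Set H) : Prop :=
  IsOpen V ∧ V.Nonempty ∧ ∃ η : H → ℝ, IsPSHExhaustion V η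

/-- `d(E₁, E₂)`, with value `∞` when either set is empty. -/
noncomputable def setEDist (E₁ E₂ : Set H) : ℝ≥0∞ :=
  ⨅ z₁ ∈ E₁, ⨅ z₂ ∈ E₂, edist z₁ z₂

/-- `d_V(S) = min{d(S, ∂V), 1/sup_{z ∈ S} ‖z‖}` (conventions `1/0 = ∞`, `1/∞ = 0`). -/
noncomputable def dV (V S : Set H) : ℝ≥0∞ :=
  min (setEDist S (frontier V)) (⨆ z ∈ S, (‖z‖₊ : ℝ≥0∞))⁻¹

/-- The Gaussian probability measure `𝒩_σ` on `ℂ`. -/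
noncomputable def gauss (σ : ℝ) : Measure ℂ :=
  volume.withDensity fun z =>
    ENNReal.ofReal ((2 * Real.pi * σ ^ 2)⁻¹ * Real.exp (-(z.re ^ 2 + z.im ^ 2) / (2 * σ ^ 2)))

/-- `P` is the Borel probability measure on `ℓ²` induced by the product of the Gaussian
measures `𝒩_{a_i}`, characterized through its finite-dimensional cylinder marginals. -/
def IsGaussMeasure [MeasurableSpace H] (a : ℕ → ℝ) (P : Measure H) : Prop :=
  IsProbabilityMeasure P ∧
  ∀ (n : ℕ) (E : ℕ → Set ℂ), (∀ i, MeasurableSet (E i)) →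
    P {z : H | ∀ i < n, z i ∈ E i} = ∏ i ∈ Finset.range n, gauss (a i) (E i)


section SmoothMajorantAux

/-- Auxiliary class of functions built from `η` by iterated coordinate derivatives, smooth
compositions, sums, products, and modification outside `V`. -/
inductive Good (V : Set H) (η : H → ℝ) : (H → ℂ) → Prop
  | base (L : List (Bool × ℕ)) : Good V η (iterD L (cplx η))
  | comp (ψ : ℝ → ℝ) (hψ : ContDiff ℝ ((⊤ : ℕ∞) : WithTop ℕ∞) ψ) : Good V η (fun z => ((ψ (η z) : ℝ) : ℂ))
  | add {g₁ g₂ : H → ℂ} : Good V η g₁ → Good V η g₂ → Good V η (fun z => g₁ z + g₂ z)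
  | mul {g₁ g₂ : H → ℂ} : Good V η g₁ → Good V η g₂ → Good V η (fun z => g₁ z * g₂ z)
  | congr {g₁ g₂ : H → ℂ} : Good V η g₁ → (∀ z ∈ V, g₁ z = g₂ z) → Good V η g₂

lemma UnifIncl.subset' {E V : Set H} (h : UnifIncl E V) : E ⊆ V := by
  obtain ⟨r, R, hr, _, hb, _⟩ := h
  exact fun z hz => hb z hz (Metric.mem_ball_self hr)

lemma line_ev_mem {V : Set H} (hVo : IsOpen V) {z : H} (hz : z ∈ V) (v : H) :
    ∀ᶠ τ : ℝ in 𝓝 (0 : ℝ), z + τ • v ∈ V := by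
  have hc : Continuous fun τ : ℝ => z + τ • v := by
    exact continuous_const.add (continuous_id.smul continuous_const)
  have h0 : z + (0 : ℝ) • v ∈ V := by simpa using hz
  have := hc.continuousAt (x := (0 : ℝ))
  exact this (hVo.mem_nhds h0)

lemma line_ev_eq {V : Set H} (hVo : IsOpen V) {g₁ g₂ : H → ℂ} (h : ∀ w ∈ V, g₁ w = g₂ w)
    {z : H} (hz : z ∈ V) (v : H) :
    (fun τ : ℝ => g₁ (z + τ • v)) =ᶠ[𝓝 (0 : ℝ)] fun τ : ℝ => g₂ (z + τ • v) :=
  (line_ev_mem hVo hz v).mono fun τ hτ => h _ hτ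

lemma eta_line_diff {V : Set H} {η : H → ℝ} (hη : MemCk V 1 (cplx η)) {z : H} (hz : z ∈ V)
    (d : Bool × ℕ) : DifferentiableAt ℝ (fun τ : ℝ => η (z + τ • dir d)) 0 := by
  have h : HasPD (dir d) (iterD [] (cplx η)) z := hη.2 [] (by norm_num) d z hz
  have h' : DifferentiableAt ℝ (fun τ : ℝ => cplx η (z + τ • dir d)) 0 := h
  have h2 := (Complex.reCLM.differentiable.differentiableAt).comp 0 h'
  simpa [Function.comp_def, cplx] using h2

lemma coordD_comp {V : Set H} {η : H → ℝ} (hη : MemCk V 1 (cplx η)) (ψ : ℝ → ℝ)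
    (hψ : Differentiable ℝ ψ) {z : H} (hz : z ∈ V) (d : Bool × ℕ) :
    coordD d (fun w => ((ψ (η w) : ℝ) : ℂ)) z = ((deriv ψ (η z) : ℝ) : ℂ) * coordD d (cplx η) z ∧
      HasPD (dir d) (fun w => ((ψ (η w) : ℝ) : ℂ)) z := by
  set v := dir d with hv
  have hu : DifferentiableAt ℝ (fun τ : ℝ => η (z + τ • v)) 0 := eta_line_diff hη hz d
  have hu' := hu.hasDerivAt
  have h0 : η (z + (0 : ℝ) • v) = η z := by simp
  have hψ' : HasDerivAt ψ (deriv ψ (η (z + (0 : ℝ) • v)))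
      ((fun τ : ℝ => η (z + τ • v)) 0) := (hψ _).hasDerivAt
  have hcomp := hψ'.comp 0 hu'
  have hC := hcomp.ofReal_comp
  constructor
  · have h1 : coordD d (fun w => ((ψ (η w) : ℝ) : ℂ)) z
        = ((deriv ψ (η (z + (0 : ℝ) • v)) * deriv (fun τ : ℝ => η (z + τ • v)) 0 : ℝ) : ℂ) := by
      have := hC.deriv
      simpa [coordD, pder, Function.comp] using this
    have h2 : coordD d (cplx η) z = ((deriv (fun τ : ℝ => η (z + τ • v)) 0 : ℝ) : ℂ) := by
      have := hu'.ofReal_comp.deriv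
      simpa [coordD, pder, cplx] using this
    rw [h1, h2, h0]
    push_cast
    ring
  · have := hC.differentiableAt
    simpa [HasPD, Function.comp] using this

lemma good_props {V : Set H} (hVo : IsOpen V) {η : H → ℝ} (hη : MemCinf V (cplx η))
    {g : H → ℂ} (hg : Good V η g) :
    ContinuousOn g V ∧ (∀ z ∈ V, ∀ d : Bool × ℕ, HasPD (dir d) g z) ∧
      ∀ d : Bool × ℕ, Good V η (coordD d g) := by
  induction hg with
  | base L =>
      refine ⟨(hη L.length).1 L le_rfl,
        fun z hz d => (hη (L.length + 1)).2 L (Nat.lt_succ_self _) d z hz,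
        fun d => ?_⟩
      exact Good.base (d :: L)
  | comp ψ hψ =>
      have hψd : Differentiable ℝ ψ := hψ.differentiable (by simp)
      have h0 : ContinuousOn (cplx η) V := (hη 0).1 [] (by norm_num)
      have hηc : ContinuousOn η V := by
        have := Complex.continuous_re.comp_continuousOn h0
        simpa [cplx, Function.comp_def] using this
      have hcont : ContinuousOn (fun z => ((ψ (η z) : ℝ) : ℂ)) V :=
        Complex.continuous_ofReal.comp_continuousOn (hψ.continuous.comp_continuousOn hηc)
      refine ⟨hcont, fun z hz d => (coordD_comp (hη 1) ψ hψd hz d).2, fun d => ?_⟩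
      have hD : ContDiff ℝ ((⊤ : ℕ∞) : WithTop ℕ∞) (deriv ψ) := (contDiff_infty_iff_deriv.mp hψ).2
      refine Good.congr (Good.mul (Good.comp (deriv ψ) hD) (Good.base [d])) ?_
      intro z hz
      exact ((coordD_comp (hη 1) ψ hψd hz d).1).symm
  | add h₁ h₂ ih₁ ih₂ =>
      obtain ⟨c₁, p₁, G₁⟩ := ih₁
      obtain ⟨c₂, p₂, G₂⟩ := ih₂
      refine ⟨c₁.add c₂, fun z hz d => (p₁ z hz d).add (p₂ z hz d), fun d => ?_⟩
      refine Good.congr (Good.add (G₁ d) (G₂ d)) ?_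
      intro z hz
      have := deriv_fun_add (p₁ z hz d) (p₂ z hz d)
      simpa [coordD, pder] using this.symm
  | mul h₁ h₂ ih₁ ih₂ =>
      obtain ⟨c₁, p₁, G₁⟩ := ih₁
      obtain ⟨c₂, p₂, G₂⟩ := ih₂
      refine ⟨c₁.mul c₂, fun z hz d => (p₁ z hz d).mul (p₂ z hz d), fun d => ?_⟩
      refine Good.congr (Good.add (Good.mul (G₁ d) h₂) (Good.mul h₁ (G₂ d))) ?_
      intro z hz
      have := deriv_fun_mul (p₁ z hz d) (p₂ z hz d)
      have h0 : z + (0 : ℝ) • dir d = z := by simp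
      simp only [coordD, pder, h0] at this ⊢
      rw [this]
  | congr h hEq ih =>
      obtain ⟨c, p, G⟩ := ih
      refine ⟨c.congr fun z hz => (hEq z hz).symm, fun z hz d => ?_, fun d => ?_⟩
      · exact ((line_ev_eq hVo hEq hz (dir d)).differentiableAt_iff).mp (p z hz d)
      · refine Good.congr (G d) ?_
        intro z hz
        exact (line_ev_eq hVo hEq hz (dir d)).deriv_eq

lemma good_iterD {V : Set H} (hVo : IsOpen V) {η : H → ℝ} (hη : MemCinf V (cplx η))
    {g : H → ℂ} (hg : Good V η g) (L : List (Bool × ℕ)) : Good V η (iterD L g) := by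
  induction L with
  | nil => exact hg
  | cons d L ih => exact (good_props hVo hη ih).2.2 d

lemma good_memCinf {V : Set H} (hVo : IsOpen V) {η : H → ℝ} (hη : MemCinf V (cplx η))
    {g : H → ℂ} (hg : Good V η g) : MemCinf V g := by
  intro k
  constructor
  · intro L _
    exact (good_props hVo hη (good_iterD hVo hη hg L)).1
  · intro L _ d z hz
    exact (good_props hVo hη (good_iterD hVo hη hg L)).2.1 z hz d

lemma exists_smooth_dominating (c : ℕ → ℝ) (hc : Monotone c) (hc0 : ∀ n, 0 ≤ c n) :
    ∃ φ : ℝ → ℝ, ContDiff ℝ ((⊤ : ℕ∞) : WithTop ℕ∞) φ ∧ ∀ t : ℝ, c ⌈t⌉₊ ≤ φ t := by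
  refine ⟨fun t => c 1 + ∑' n : ℕ, c (n + 3) * Real.smoothTransition (t - n), ?_, ?_⟩
  · rw [contDiff_iff_contDiffAt]
    intro t₀
    set N : ℕ := ⌈t₀⌉₊ + 1 with hN
    have hev : (fun t => c 1 + ∑ n ∈ Finset.range N, c (n + 3) * Real.smoothTransition (t - n))
        =ᶠ[𝓝 t₀] fun t => c 1 + ∑' n : ℕ, c (n + 3) * Real.smoothTransition (t - n) := by
      have ht₀ : t₀ < (N : ℝ) := by
        have := Nat.le_ceil t₀
        push_cast [hN]
        linarith
      filter_upwards [Iio_mem_nhds ht₀] with t ht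
      congr 1
      refine (tsum_eq_sum ?_).symm
      intro n hn
      have hn' : (N : ℝ) ≤ (n : ℝ) := by
        exact_mod_cast Nat.le_of_not_lt (fun h => hn (Finset.mem_range.mpr h))
      have : Real.smoothTransition (t - n) = 0 :=
        Real.smoothTransition.zero_of_nonpos (by simp only [Set.mem_Iio] at ht; linarith)
      simp [this]
    refine ContDiffAt.congr_of_eventuallyEq ?_ hev.symm
    have : ContDiff ℝ ((⊤ : ℕ∞) : WithTop ℕ∞)
        (fun t : ℝ => c 1 + ∑ n ∈ Finset.range N, c (n + 3) * Real.smoothTransition (t - n)) := by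
      refine contDiff_const.add (ContDiff.sum fun i _ => contDiff_const.mul ?_)
      exact Real.smoothTransition.contDiff.comp (contDiff_id.sub contDiff_const)
    exact this.contDiffAt
  · intro t
    have hzero : ∀ n ∉ Finset.range ⌈t⌉₊, c (n + 3) * Real.smoothTransition (t - n) = 0 := by
      intro n hn
      have hn' : (⌈t⌉₊ : ℝ) ≤ (n : ℝ) := by
        exact_mod_cast Nat.le_of_not_lt (fun h => hn (Finset.mem_range.mpr h))
      have ht : t ≤ (n : ℝ) := (Nat.le_ceil t).trans hn'
      rw [Real.smoothTransition.zero_of_nonpos (by linarith), mul_zero]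
    have hsum : Summable fun n : ℕ => c (n + 3) * Real.smoothTransition (t - n) :=
      summable_of_ne_finset_zero hzero
    have hnn : ∀ n : ℕ, 0 ≤ c (n + 3) * Real.smoothTransition (t - n) := fun n =>
      mul_nonneg (hc0 _) (Real.smoothTransition.nonneg _)
    rcases le_or_gt ⌈t⌉₊ 1 with h1 | h1
    · calc c ⌈t⌉₊ ≤ c 1 := hc h1
        _ ≤ _ := le_add_of_nonneg_right (tsum_nonneg hnn)
    · obtain ⟨m, hm⟩ : ∃ m : ℕ, ⌈t⌉₊ = m + 2 := ⟨⌈t⌉₊ - 2, by omega⟩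
      have htm : (m : ℝ) + 1 < t := by
        have : (m + 1 : ℕ) < ⌈t⌉₊ := by omega
        have := Nat.lt_ceil.mp this
        push_cast at this
        linarith
      have hθ : Real.smoothTransition (t - m) = 1 :=
        Real.smoothTransition.one_of_one_le (by linarith)
      calc c ⌈t⌉₊ ≤ c (m + 3) := hc (by omega)
        _ = c (m + 3) * Real.smoothTransition (t - m) := by rw [hθ, mul_one]
        _ ≤ ∑' n : ℕ, c (n + 3) * Real.smoothTransition (t - n) :=
            Summable.le_tsum hsum m fun i _ => hnn i
        _ ≤ _ := le_add_of_nonneg_left (hc0 1)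

end SmoothMajorantAux

/-- On a pseudo-convex domain `V`, every locally bounded function `f`
(bounded on each `E ⊂∘ V`) is dominated by some real-valued `g ∈ C^∞_F(V)`. -/
theorem exists_smooth_majorant
    (V : Set H) (hVo : IsOpen V) (hVne : V.Nonempty)
    (η : H → ℝ) (hη : IsPSHExhaustion V η)
    (f : H → ℂ) (hf : ∀ E : Set H, UnifIncl E V → ∃ M : ℝ, ∀ z ∈ E, ‖f z‖ ≤ M) :
    ∃ g : H → ℝ, MemCinf V (cplx g) ∧ FBound V (cplx g) ∧ ∀ z ∈ V, ‖f z‖ ≤ g z := by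
  obtain ⟨hsm, hFB, hexh, -⟩ := hη
  choose M hM using fun n : ℕ => hf _ (hexh (n : ℝ))
  -- a monotone nonnegative envelope of the bounds
  set c : ℕ → ℝ := fun n => Nat.rec (max (M 0) 0) (fun k ih => max ih (max (M (k + 1)) 0)) n
    with hc_def
  have hc_succ : ∀ n, c (n + 1) = max (c n) (max (M (n + 1)) 0) := fun n => rfl
  have hc_mono : Monotone c := monotone_nat_of_le_succ fun n => by
    rw [hc_succ]; exact le_max_left _ _
  have hc0 : ∀ n, 0 ≤ c n := by
    intro n
    induction n with
    | zero => exact le_max_right _ _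
    | succ k ih => rw [hc_succ]; exact ih.trans (le_max_left _ _)
  have hMc : ∀ n, M n ≤ c n := by
    intro n
    cases n with
    | zero => exact le_max_left _ _
    | succ k => rw [hc_succ]; exact le_trans (le_max_left _ _) (le_max_right _ _)
  obtain ⟨φ, hφ₁, hφ₂⟩ := exists_smooth_dominating c hc_mono hc0
  have hφd : Differentiable ℝ φ := hφ₁.differentiable (by simp)
  refine ⟨fun z => φ (η z), ?_, ?_, ?_⟩
  · exact good_memCinf hVo hsm (Good.comp φ hφ₁)
  · -- FBound
    intro E hEV
    obtain ⟨ME, hME⟩ := hFB E hEV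
    have hEV' : E ⊆ V := hEV.subset'
    set K : ℝ := max ME 0 with hK
    have hK0 : 0 ≤ K := le_max_right _ _
    have hηbd : ∀ z ∈ E, |η z| ≤ K := by
      intro z hz
      have h1 : ENNReal.ofReal ‖cplx η z‖ ≤ ENNReal.ofReal K :=
        le_trans (le_trans le_self_add (hME z hz)) (ENNReal.ofReal_le_ofReal (le_max_left _ _))
      have h2 := (ENNReal.ofReal_le_ofReal_iff hK0).mp h1
      simpa [cplx, Real.norm_eq_abs] using h2
    obtain ⟨C₀, hC₀⟩ := (isCompact_Icc (a := -K) (b := K)).exists_bound_of_continuousOn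
      hφ₁.continuous.continuousOn
    obtain ⟨C₁, hC₁⟩ := (isCompact_Icc (a := -K) (b := K)).exists_bound_of_continuousOn
      ((hφ₁.continuous_deriv (by exact_mod_cast (le_top : (1:ℕ∞) ≤ ⊤))).continuousOn)
    set C0 : ℝ := max C₀ 0 with hC0'
    set C1 : ℝ := max C₁ 0 with hC1'
    have hC00 : 0 ≤ C0 := le_max_right _ _
    have hC10 : 0 ≤ C1 := le_max_right _ _
    refine ⟨C0 + C1 ^ 2 * K, ?_⟩
    intro z hz
    have hzV : z ∈ V := hEV' hz
    have hmem : η z ∈ Set.Icc (-K) K := by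
      have := abs_le.mp (hηbd z hz); exact ⟨this.1, this.2⟩
    have hkey : ∀ d : Bool × ℕ, coordD d (cplx fun z => φ (η z)) z
        = ((deriv φ (η z) : ℝ) : ℂ) * coordD d (cplx η) z :=
      fun d => (coordD_comp (hsm 1) φ hφd hzV d).1
    have hφb : ‖cplx (fun z => φ (η z)) z‖ ≤ C0 := by
      have h := hC₀ _ hmem
      rw [Real.norm_eq_abs] at h
      calc ‖cplx (fun z => φ (η z)) z‖ = |φ (η z)| := by
            simp [cplx, Complex.norm_real, Real.norm_eq_abs]
        _ ≤ C0 := h.trans (le_max_left _ _)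
    have hderivb : |deriv φ (η z)| ≤ C1 := by
      have h := hC₁ _ hmem
      rw [Real.norm_eq_abs] at h
      exact h.trans (le_max_left _ _)
    have hterm : ∀ d : Bool × ℕ,
        ENNReal.ofReal (‖coordD d (cplx fun z => φ (η z)) z‖ ^ 2)
          ≤ ENNReal.ofReal (C1 ^ 2) * ENNReal.ofReal (‖coordD d (cplx η) z‖ ^ 2) := by
      intro d
      rw [← ENNReal.ofReal_mul (by positivity)]
      apply ENNReal.ofReal_le_ofReal
      rw [hkey d]
      have h1 : ‖((deriv φ (η z) : ℝ) : ℂ) * coordD d (cplx η) z‖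
          = |deriv φ (η z)| * ‖coordD d (cplx η) z‖ := by
        rw [norm_mul]; simp [Real.norm_eq_abs]
      rw [h1, mul_pow]
      have h2 : |deriv φ (η z)| ^ 2 ≤ C1 ^ 2 :=
        pow_le_pow_left₀ (abs_nonneg _) hderivb 2
      exact mul_le_mul_of_nonneg_right h2 (by positivity)
    have hsumη : (∑' j : ℕ, (ENNReal.ofReal (‖coordD (true, j) (cplx η) z‖ ^ 2) +
        ENNReal.ofReal (‖coordD (false, j) (cplx η) z‖ ^ 2))) ≤ ENNReal.ofReal K :=
      le_trans (le_trans le_add_self (hME z hz)) (ENNReal.ofReal_le_ofReal (le_max_left _ _))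
    calc ENNReal.ofReal ‖cplx (fun z => φ (η z)) z‖ +
          ∑' j : ℕ, (ENNReal.ofReal (‖coordD (true, j) (cplx fun z => φ (η z)) z‖ ^ 2) +
            ENNReal.ofReal (‖coordD (false, j) (cplx fun z => φ (η z)) z‖ ^ 2))
        ≤ ENNReal.ofReal C0 + ∑' j : ℕ,
            (ENNReal.ofReal (C1 ^ 2) * ENNReal.ofReal (‖coordD (true, j) (cplx η) z‖ ^ 2) +
             ENNReal.ofReal (C1 ^ 2) * ENNReal.ofReal (‖coordD (false, j) (cplx η) z‖ ^ 2)) := by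
          refine add_le_add (ENNReal.ofReal_le_ofReal hφb) (ENNReal.tsum_le_tsum fun j => ?_)
          exact add_le_add (hterm (true, j)) (hterm (false, j))
      _ = ENNReal.ofReal C0 + ENNReal.ofReal (C1 ^ 2) *
            ∑' j : ℕ, (ENNReal.ofReal (‖coordD (true, j) (cplx η) z‖ ^ 2) +
              ENNReal.ofReal (‖coordD (false, j) (cplx η) z‖ ^ 2)) := by
          rw [← ENNReal.tsum_mul_left]
          congr 1
          exact tsum_congr fun j => (mul_add _ _ _).symm
      _ ≤ ENNReal.ofReal C0 + ENNReal.ofReal (C1 ^ 2) * ENNReal.ofReal K :=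
          add_le_add le_rfl (mul_le_mul_right hsumη _)
      _ = ENNReal.ofReal (C0 + C1 ^ 2 * K) := by
          rw [← ENNReal.ofReal_mul (by positivity), ← ENNReal.ofReal_add hC00 (by positivity)]
  · intro z hz
    have hz' : z ∈ {w : H | w ∈ V ∧ η w ≤ ((⌈η z⌉₊ : ℕ) : ℝ)} := ⟨hz, Nat.le_ceil _⟩
    calc ‖f z‖ ≤ M ⌈η z⌉₊ := hM _ z hz'
      _ ≤ c ⌈η z⌉₊ := hMc _
      _ ≤ φ (η z) := hφ₂ (η z)

end
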